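/- For the discrete kernels a^{(β,n)}_{n-k} defined from ω_β(t) = t^{β-1}/Γ(β) on a variable grid, one has (1+β) a^{(β,n)}_0 > a^{(β,n)}_1 for all n ≥ 2, where a^{(β,n)}_0 = τ_n^{β-1}/Γ(2+β) and a^{(β,n)}_1 = (r_n/(Γ(2+β) τ_n^{1-β})) ((1+1/r_n)^{1+β} - 1/r_n^{1+β} - 1) with r_n = τ_n/τ_{n-1}. -/

import Mathlib

open Real in
private lemma rsub_strict (β : ℝ) (hβ0 : 0 < β) (hβ1 : β < 1) {s : ℝ} (hs : 0 < s) :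
    (1 + s) ^ β < 1 + s ^ β := by
  set g : ℝ → ℝ := fun x => 1 + x ^ β - (1 + x) ^ β with hg
  have hcont : ContinuousOn g (Set.Ici (0:ℝ)) := by
    apply ContinuousOn.sub
    · apply ContinuousOn.add continuousOn_const
      exact (Real.continuous_rpow_const hβ0.le).continuousOn
    · intro x hx
      exact ((Real.continuousAt_rpow_const (1 + x) β
        (Or.inl (by simp at hx; positivity))).comp
        (by fun_prop : ContinuousAt (fun x : ℝ => 1 + x) x)).continuousWithinAt
  have hderiv : ∀ x ∈ interior (Set.Ici (0:ℝ)), 0 < deriv g x := by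
    intro x hx
    rw [interior_Ici] at hx
    have hx0 : (0:ℝ) < x := hx
    have h1 : HasDerivAt (fun x : ℝ => x ^ β) (β * x ^ (β - 1)) x :=
      Real.hasDerivAt_rpow_const (Or.inl hx0.ne')
    have h2' : HasDerivAt (fun x : ℝ => 1 + x) 1 x := (hasDerivAt_id x).const_add 1
    have h2 : HasDerivAt (fun x : ℝ => (1 + x) ^ β) (β * (1 + x) ^ (β - 1)) x := by
      have := (Real.hasDerivAt_rpow_const (p := β)
        (Or.inl (by positivity : (0:ℝ) < 1 + x).ne')).comp x h2'
      simpa [Function.comp_def] using this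
    have hgd : HasDerivAt g (β * x ^ (β - 1) - β * (1 + x) ^ (β - 1)) x :=
      (h1.const_add 1).sub h2
    rw [hgd.deriv]
    have hlt : (1 + x) ^ (β - 1) < x ^ (β - 1) :=
      Real.rpow_lt_rpow_of_neg hx0 (by linarith) (by linarith)
    nlinarith
  have hmono := strictMonoOn_of_deriv_pos (convex_Ici (0:ℝ)) hcont hderiv
  have h0 : g 0 = 0 := by
    simp [hg, Real.zero_rpow hβ0.ne', Real.one_rpow]
  have := hmono (Set.self_mem_Ici) (Set.mem_Ici.mpr hs.le) hs
  rw [h0] at this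
  simp only [hg] at this
  linarith

open Real in
private lemma key_ineq (β : ℝ) (hβ0 : 0 < β) (hβ1 : β < 1) {s : ℝ} (hs : 0 < s) :
    (1 + s) ^ (1 + β) < 1 + (1 + β) * s + s ^ (1 + β) := by
  set f : ℝ → ℝ := fun x => 1 + (1 + β) * x + x ^ (1 + β) - (1 + x) ^ (1 + β) with hf
  have hcont : ContinuousOn f (Set.Ici (0:ℝ)) := by
    apply ContinuousOn.sub
    · apply ContinuousOn.add (by fun_prop)
      exact (Real.continuous_rpow_const (by linarith)).continuousOn
    · intro x hx
      exact ((Real.continuousAt_rpow_const (1 + x) (1 + β)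
        (Or.inl (by simp at hx; positivity))).comp
        (by fun_prop : ContinuousAt (fun x : ℝ => 1 + x) x)).continuousWithinAt
  have hderiv : ∀ x ∈ interior (Set.Ici (0:ℝ)), 0 < deriv f x := by
    intro x hx
    rw [interior_Ici] at hx
    have hx0 : (0:ℝ) < x := hx
    have h1 : HasDerivAt (fun x : ℝ => x ^ (1 + β)) ((1 + β) * x ^ (1 + β - 1)) x :=
      Real.hasDerivAt_rpow_const (Or.inl hx0.ne')
    have h2' : HasDerivAt (fun x : ℝ => 1 + x) 1 x := (hasDerivAt_id x).const_add 1
    have h2 : HasDerivAt (fun x : ℝ => (1 + x) ^ (1 + β))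
        ((1 + β) * (1 + x) ^ (1 + β - 1)) x := by
      have := (Real.hasDerivAt_rpow_const (p := 1 + β)
        (Or.inl (by positivity : (0:ℝ) < 1 + x).ne')).comp x h2'
      simpa [Function.comp_def] using this
    have h3 : HasDerivAt (fun x : ℝ => 1 + (1 + β) * x) (1 + β) x := by
      simpa using ((hasDerivAt_id x).const_mul (1 + β)).const_add 1
    have hfd : HasDerivAt f
        ((1 + β) + (1 + β) * x ^ (1 + β - 1) - (1 + β) * (1 + x) ^ (1 + β - 1)) x :=
      (h3.add h1).sub h2
    rw [hfd.deriv]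
    have he : 1 + β - 1 = β := by ring
    rw [he]
    have := rsub_strict β hβ0 hβ1 hx0
    nlinarith
  have hmono := strictMonoOn_of_deriv_pos (convex_Ici (0:ℝ)) hcont hderiv
  have h0 : f 0 = 0 := by
    simp [hf, Real.zero_rpow (by positivity : (1:ℝ) + β ≠ 0), Real.one_rpow]
  have := hmono (Set.self_mem_Ici) (Set.mem_Ici.mpr hs.le) hs
  rw [h0] at this
  simp only [hf] at this
  linarith

/-- For the discrete kernels with `a^{(β,n)}_0 = τ_n^{β-1}/Γ(2+β)` and
`a^{(β,n)}_1 = (r_n/(Γ(2+β) τ_n^{1-β}))((1+1/r_n)^{1+β} - 1/r_n^{1+β} - 1)`,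
one has `(1+β) a^{(β,n)}_0 > a^{(β,n)}_1`. -/
theorem first_kernel_dominance (β τ r : ℝ) (hβ0 : 0 < β) (hβ1 : β < 1)
    (hτ : 0 < τ) (hr : 0 < r) :
    (r / (Real.Gamma (2 + β) * τ ^ (1 - β))) *
        ((1 + 1 / r) ^ (1 + β) - 1 / r ^ (1 + β) - 1)
      < (1 + β) * (τ ^ (β - 1) / Real.Gamma (2 + β)) := by
  have hG : 0 < Real.Gamma (2 + β) := Real.Gamma_pos_of_pos (by linarith)
  have hT : 0 < τ ^ (1 - β) := Real.rpow_pos_of_pos hτ _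
  set s : ℝ := r⁻¹ with hsdef
  have hs : 0 < s := inv_pos.mpr hr
  have h1 : 1 / r ^ (1 + β) = s ^ (1 + β) := by
    rw [hsdef, Real.inv_rpow hr.le, one_div]
  have h2 : 1 + 1 / r = 1 + s := by rw [one_div, hsdef]
  rw [h1, h2]
  have key : (1 + s) ^ (1 + β) - s ^ (1 + β) - 1 < (1 + β) * s := by
    have := key_ineq β hβ0 hβ1 hs
    linarith
  have hτeq : τ ^ (β - 1) = (τ ^ (1 - β))⁻¹ := by
    rw [show β - 1 = -(1 - β) by ring, Real.rpow_neg hτ.le]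
  rw [hτeq]
  calc (r / (Real.Gamma (2 + β) * τ ^ (1 - β))) * ((1 + s) ^ (1 + β) - s ^ (1 + β) - 1)
      < (r / (Real.Gamma (2 + β) * τ ^ (1 - β))) * ((1 + β) * s) := by
        apply mul_lt_mul_of_pos_left key (by positivity)
    _ = (1 + β) * ((τ ^ (1 - β))⁻¹ / Real.Gamma (2 + β)) := by
        rw [hsdef]; field_simp
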